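/- The boundary fusion relation holds: K^W₁(z,r) L(z²,r) K^V₂(z) ι(r) = (1 − z⁴)(ξ − q²z²) ι(r) K^W(qz, qr) as maps W → W ⊗ V. -/

import Mathlib

noncomputable section

open Finsupp Matrix

/-- The infinite-dimensional space `W = ⊕_{j≥0} ℂ w^j`. -/
abbrev Wsp : Type := ℕ →₀ ℂ

abbrev EndW : Type := Module.End ℂ Wsp

/-- The basis vector `w^j`. -/
def wv (j : ℕ) : Wsp := Finsupp.single j 1

/-- The linear operator on `W` determined by its values on the basis. -/
def mkOp (g : ℕ → Wsp) : EndW :=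
  Finsupp.lsum ℂ fun j => LinearMap.toSpanSingleton ℂ Wsp (g j)

/-- The annihilation operator `a`. -/
def opA : EndW := mkOp fun j => match j with | 0 => 0 | i + 1 => wv i

/-- The creation operator `a†`. -/
def opAdag (q : ℂ) : EndW := mkOp fun j => (1 - q ^ (2 * (j + 1))) • wv (j + 1)

/-- The diagonal operator `f(D)`. -/
def opDiag (f : ℕ → ℂ) : EndW := mkOp fun j => f j • wv j

/-- The L-operator `L(z,r)` on `W ⊗ ℂ²`, written as a 2×2 matrix with entries in `End(W)`. -/
def Lmat (q z r : ℂ) : Matrix (Fin 2) (Fin 2) EndW :=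
  !![1, -(q⁻¹ * z) • opAdag q;
     -(q * z) • opA, opDiag fun j => 1 - q ^ (2 * (j + 1)) * z ^ 2] *
  !![r • opDiag (fun j => q ^ j), 0;
     0, opDiag fun j => (q ^ j)⁻¹]

/-- The infinite-dimensional K-matrix `K^W(z,r)`, acting diagonally on `W` by
`w^j ↦ (q r⁻¹)^j ∏_{i=1}^j (z² - q^{-2i} ξ) w^j`. -/
def KWop (q r ξ z : ℂ) : EndW :=
  opDiag fun j => (q * r⁻¹) ^ j * ∏ i ∈ Finset.range j, (z ^ 2 - (q⁻¹) ^ (2 * (i + 1)) * ξ)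

/-- An operator `X` on `W`, acting in the first factor of `W ⊗ ℂ²`. -/
def d2 (X : EndW) : Matrix (Fin 2) (Fin 2) EndW := !![X, 0; 0, X]

/-- The diagonal K-matrix `K^V(z) = diag(ξz²-1, ξ-z²)`, acting in the second factor of
`W ⊗ ℂ²`. -/
def KVd2 (ξ z : ℂ) : Matrix (Fin 2) (Fin 2) EndW :=
  !![(ξ * z ^ 2 - 1) • 1, 0; 0, (ξ - z ^ 2) • 1]

/-- The components of the fusion intertwiner `ι(r) : W → W ⊗ V`,
`ι(r)(w^j) = (q^{-j-1} - q^{j+1}) w^{j+1} ⊗ v⁰ + q^{j+1} r w^j ⊗ v¹`. -/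
def iotaC (q r : ℂ) : Fin 2 → EndW :=
  ![mkOp fun j => ((q⁻¹) ^ (j + 1) - q ^ (j + 1)) • wv (j + 1),
    opDiag fun j => q ^ (j + 1) * r]

/-- The components of the fusion intertwiner `τ(r) : W ⊗ V → W`,
`τ(r)(w^j ⊗ v⁰) = q^j w^j`, `τ(r)(w^j ⊗ v¹) = (q^{j+1} - q^{-j-1}) r⁻¹ w^{j+1}`. -/
def tauC (q r : ℂ) : Fin 2 → EndW :=
  ![opDiag fun j => q ^ j,
    mkOp fun j => ((q ^ (j + 1) - (q⁻¹) ^ (j + 1)) * r⁻¹) • wv (j + 1)]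


lemma mkOp_wv (g : ℕ → Wsp) (j : ℕ) : mkOp g (wv j) = g j := by
  simp [mkOp, wv]

lemma endW_ext {f g : EndW} (h : ∀ j, f (wv j) = g (wv j)) : f = g := by
  refine Finsupp.lhom_ext fun a b => ?_
  have hs : (Finsupp.single a b : Wsp) = b • wv a := by simp [wv, Finsupp.smul_single]
  rw [hs, _root_.map_smul, _root_.map_smul, h]

lemma prod_shift (q z ξ : ℂ) (hq0 : q ≠ 0) (n : ℕ) :
    ∏ i ∈ Finset.range n, ((q*z)^2 - q⁻¹^(2*(i+1))*ξ)
      = (q^n)^2 * ∏ i ∈ Finset.range n, (z^2 - q⁻¹^(2*(i+1+1))*ξ) := by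
  induction n with
  | zero => simp
  | succ m ih =>
    rw [Finset.prod_range_succ, Finset.prod_range_succ, ih]
    generalize (∏ i ∈ Finset.range m, (z^2 - q⁻¹^(2*(i+1+1))*ξ)) = P
    have h1 : q ^ (2*(m+1)) ≠ 0 := pow_ne_zero _ hq0
    have h2 : q ^ (2*(m+1+1)) ≠ 0 := pow_ne_zero _ hq0
    field_simp
    have hq2 : q ^ 2 * q⁻¹ ^ 4 = q⁻¹ ^ 2 := by field_simp
    linear_combination (q ^ (m * 2) * P * q⁻¹ ^ (m * 2) * ξ) * hq2

lemma prod_join (q z ξ : ℂ) (j : ℕ) :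
    (∏ i ∈ Finset.range j, (z^2 - q⁻¹^(2*(i+1))*ξ)) * (z^2 - q⁻¹^(2*(j+1))*ξ)
      = (z^2 - q⁻¹^2*ξ) * ∏ i ∈ Finset.range j, (z^2 - q⁻¹^(2*(i+1+1))*ξ) := by
  rw [← Finset.prod_range_succ, Finset.prod_range_succ']
  norm_num [mul_comm]

/-- boundary fusion relation
`K^W₁(z,r) L(z²,r) K^V₂(z) ι(r) = (1-z⁴)(ξ-q²z²) ι(r) K^W(qz,qr)` as maps `W → W ⊗ V`. -/
theorem boundary_fusion_iota (q r ξ z : ℂ) (hq0 : q ≠ 0) (hq1 : q ≠ 1) (hqm1 : q ≠ -1)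
    (hr : r ≠ 0) (hξ : ξ ≠ 0) (hz : z ≠ 0) :
    (d2 (KWop q r ξ z) * Lmat q (z ^ 2) r * KVd2 ξ z).mulVec (iotaC q r) =
      fun i => ((1 - z ^ 4) * (ξ - q ^ 2 * z ^ 2)) •
        (iotaC q r i * KWop q (q * r) ξ (q * z)) := by
  rw [show Lmat q (z ^ 2) r = _ from Matrix.mul_fin_two _ _ _ _ _ _ _ _, d2, KVd2]
  rw [Matrix.mul_fin_two, Matrix.mul_fin_two]
  have hA : ∀ n : ℕ, q ^ n ≠ 0 := fun n => pow_ne_zero _ hq0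
  have hR : ∀ n : ℕ, r ^ n ≠ 0 := fun n => pow_ne_zero _ hr
  funext i
  fin_cases i
  · apply endW_ext; intro j
    simp only [Matrix.mulVec, dotProduct, Fin.sum_univ_two, Fin.isValue, iotaC,
      Matrix.cons_val', Matrix.cons_val_zero, Matrix.cons_val_one, Matrix.head_cons,
      Matrix.head_fin_const, Matrix.empty_val', Matrix.cons_val_fin_one, Matrix.of_apply,
      Module.End.mul_apply, LinearMap.add_apply, LinearMap.smul_apply, Module.End.one_apply,
      LinearMap.zero_apply, mul_zero, zero_mul, add_zero, zero_add, mul_one, one_mul,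
      zero_smul, smul_zero, Fin.mk_zero, Fin.mk_one,
      KWop, opA, opAdag, opDiag, mkOp_wv, _root_.map_smul, smul_smul]
    rw [← add_smul]
    congr 1
    rw [Finset.prod_range_succ', prod_shift q z ξ hq0 j]
    generalize (∏ i ∈ Finset.range j, (z^2 - q⁻¹^(2*(i+1+1))*ξ)) = P
    have h1 : q ^ (2*(j+1)) ≠ 0 := hA _
    simp only [mul_pow, inv_pow]
    field_simp [hA, hR]
    ring
  · apply endW_ext; intro j
    simp only [Matrix.mulVec, dotProduct, Fin.sum_univ_two, Fin.isValue, iotaC,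
      Matrix.cons_val', Matrix.cons_val_zero, Matrix.cons_val_one, Matrix.head_cons,
      Matrix.head_fin_const, Matrix.empty_val', Matrix.cons_val_fin_one, Matrix.of_apply,
      Module.End.mul_apply, LinearMap.add_apply, LinearMap.smul_apply, Module.End.one_apply,
      LinearMap.zero_apply, mul_zero, zero_mul, add_zero, zero_add, mul_one, one_mul,
      zero_smul, smul_zero, Fin.mk_zero, Fin.mk_one,
      KWop, opA, opAdag, opDiag, mkOp_wv, _root_.map_smul, smul_smul]
    rw [← add_smul]
    congr 1
    rw [prod_shift q z ξ hq0 j]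
    trans ((q * r * ((1:ℂ) - z^4) * (q * r⁻¹)^j * -(q^(2*(j+1)))) *
      ((z^2 - q⁻¹^2*ξ) * ∏ i ∈ Finset.range j, (z^2 - q⁻¹^(2*(i+1+1))*ξ)))
    · rw [← prod_join q z ξ j]
      generalize (∏ i ∈ Finset.range j, (z^2 - q⁻¹^(2*(i+1))*ξ)) = P
      have h1 : q ^ (2*(j+1)) ≠ 0 := hA _
      simp only [mul_pow, inv_pow]
      field_simp [hA, hR]
      ring
    · generalize (∏ i ∈ Finset.range j, (z^2 - q⁻¹^(2*(i+1+1))*ξ)) = P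
      have h1 : q ^ (2*(j+1)) ≠ 0 := hA _
      simp only [mul_pow, inv_pow]
      field_simp [hA, hR]
      ring
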